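/- Let q ∈ ℕ and w ∈ W. If (ω, r) and (ω′, r′) are both right-sided w-Gauß–Radau quadratures of order q, then (ω, r) = (ω′, r′); i.e., the w-Gauß–Radau quadrature of order q is unique. -/

import Mathlib

open MeasureTheory Real

/-- The class `W` of weighting functions: `w ∈ L¹(-1,1)` with `w > 0` almost everywhere. -/
def IsWeight (w : ℝ → ℝ) : Prop :=
  IntegrableOn w (Set.Ioo (-1 : ℝ) 1) ∧
    ∀ᵐ x ∂(volume.restrict (Set.Ioo (-1 : ℝ) 1)), 0 < w x

/-- A (right-sided) `w`-Gauß–Radau quadrature of order `q`. -/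
def IsGaussRadauQuad (q : ℕ) (w : ℝ → ℝ) (ω r : Fin (q + 1) → ℝ) : Prop :=
  (∀ j, r j ∈ Set.Icc (-1 : ℝ) 1) ∧ Monotone r ∧ r (Fin.last q) = 1 ∧
    ∀ p : Polynomial ℝ, p.natDegree ≤ 2 * q →
      ∫ x in Set.Ioo (-1 : ℝ) 1, p.eval x * w x = ∑ j, ω j * p.eval (r j)

open Polynomial in
lemma grq_integrable (w : ℝ → ℝ) (hw : IsWeight w) (p : ℝ[X]) :
    Integrable (fun x => p.eval x * w x) (volume.restrict (Set.Ioo (-1 : ℝ) 1)) := by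
  obtain ⟨C, hC⟩ := isCompact_Icc.exists_bound_of_continuousOn
    (f := fun x : ℝ => p.eval x) (s := Set.Icc (-1 : ℝ) 1) (p.continuous_aeval.continuousOn)
  refine hw.1.bdd_mul (c := C) (p.continuous_aeval.aestronglyMeasurable) ?_
  filter_upwards [ae_restrict_mem measurableSet_Ioo] with x hx
  exact hC x ⟨hx.1.le, hx.2.le⟩

open Polynomial in
lemma grq_pos (w : ℝ → ℝ) (hw : IsWeight w) (p : ℝ[X]) (hp : p ≠ 0)
    (hnn : ∀ x ∈ Set.Ioo (-1 : ℝ) 1, 0 ≤ p.eval x) :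
    0 < ∫ x in Set.Ioo (-1 : ℝ) 1, p.eval x * w x := by
  set μ := volume.restrict (Set.Ioo (-1 : ℝ) 1) with hμ
  have hroots : (volume : Measure ℝ) {x | p.IsRoot x} = 0 :=
    (Polynomial.finite_setOf_isRoot hp).measure_zero _
  have hae : ∀ᵐ x ∂μ, p.eval x ≠ 0 := by
    refine ae_restrict_of_ae ?_
    rw [ae_iff]
    simpa [Polynomial.IsRoot] using hroots
  have hmem : ∀ᵐ x ∂μ, x ∈ Set.Ioo (-1 : ℝ) 1 := ae_restrict_mem measurableSet_Ioo
  have hwpos := hw.2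
  have hnn' : 0 ≤ᵐ[μ] fun x => p.eval x * w x := by
    filter_upwards [hmem, hwpos] with x hx hwx
    exact mul_nonneg (hnn x hx) hwx.le
  have hint := grq_integrable w hw p
  rw [show (∫ x in Set.Ioo (-1 : ℝ) 1, p.eval x * w x) = ∫ x, p.eval x * w x ∂μ from rfl,
    integral_pos_iff_support_of_nonneg_ae hnn' hint]
  have hsupp : ∀ᵐ x ∂μ, x ∈ Function.support fun x => p.eval x * w x := by
    filter_upwards [hwpos, hae] with x hwx hpa
    exact mul_ne_zero hpa (ne_of_gt hwx)
  rcases (zero_le (a := μ (Function.support fun x => p.eval x * w x))).lt_or_eq with hlt | heq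
  · exact hlt
  exfalso
  have hcompl : μ (Function.support fun x => p.eval x * w x)ᶜ = 0 := by
    rw [Set.compl_def]
    exact hsupp
  have huniv : μ Set.univ ≤ 0 := by
    calc μ Set.univ
        = μ ((Function.support fun x => p.eval x * w x) ∪
            (Function.support fun x => p.eval x * w x)ᶜ) := by rw [Set.union_compl_self]
      _ ≤ μ (Function.support fun x => p.eval x * w x) +
            μ (Function.support fun x => p.eval x * w x)ᶜ := measure_union_le _ _
      _ = 0 := by rw [← heq, hcompl, add_zero]
  have : μ Set.univ = ENNReal.ofReal 2 := by
    rw [hμ, Measure.restrict_apply_univ, Real.volume_Ioo]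
    norm_num
  rw [this] at huniv
  simp [ENNReal.ofReal_eq_zero] at huniv

open Polynomial Finset in
lemma auxP_facts (q : ℕ) (r : Fin (q + 1) → ℝ) (i : Fin (q + 1)) :
    ((univ.erase i).prod fun k => ((X : ℝ[X]) - C (r k)) ^ 2).Monic ∧
      ((univ.erase i).prod fun k => ((X : ℝ[X]) - C (r k)) ^ 2).natDegree = 2 * q := by
  have hm : ∀ k ∈ univ.erase i, (((X : ℝ[X]) - C (r k)) ^ 2).Monic :=
    fun k _ => (monic_X_sub_C _).pow 2
  refine ⟨monic_prod_of_monic _ _ hm, ?_⟩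
  rw [natDegree_prod_of_monic _ _ hm]
  simp only [natDegree_pow, natDegree_X_sub_C, mul_one, sum_const, smul_eq_mul]
  rw [card_erase_of_mem (mem_univ i), card_univ, Fintype.card_fin]
  omega

open Polynomial Finset in
lemma grq_inj (q : ℕ) (w : ℝ → ℝ) (hw : IsWeight w) (ω r : Fin (q + 1) → ℝ)
    (h : IsGaussRadauQuad q w ω r) : Function.Injective r := by
  intro i j hij
  by_contra hne
  obtain ⟨hmon, hdeg⟩ := auxP_facts q r i
  set P : ℝ[X] := (univ.erase i).prod fun k => ((X : ℝ[X]) - C (r k)) ^ 2 with hP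
  have hquad := h.2.2.2 P (le_of_eq hdeg)
  have hzero : ∀ k, P.eval (r k) = 0 := by
    intro k
    by_cases hk : k = i
    · subst hk
      rw [hP, eval_prod]
      refine prod_eq_zero (mem_erase.2 ⟨Ne.symm hne, mem_univ j⟩) ?_
      simp [← hij]
    · rw [hP, eval_prod]
      refine prod_eq_zero (mem_erase.2 ⟨hk, mem_univ k⟩) ?_
      simp
  have hsum : ∑ k, ω k * P.eval (r k) = 0 :=
    Finset.sum_eq_zero fun k _ => by rw [hzero k, mul_zero]
  have hpos := grq_pos w hw P hmon.ne_zero (fun x _ => by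
    rw [hP, eval_prod]
    exact prod_nonneg fun k _ => by
      simp only [eval_pow, eval_sub, eval_X, eval_C]; exact sq_nonneg _)
  rw [hquad, hsum] at hpos
  exact lt_irrefl 0 hpos

open Polynomial Finset in
/-- Proposition `p:uni` (4): the right-sided `w`-Gauß–Radau quadrature of order `q`
is unique. -/
theorem stmt_13 (q : ℕ) (w : ℝ → ℝ) (hw : IsWeight w)
    (ω r ω' r' : Fin (q + 1) → ℝ)
    (h : IsGaussRadauQuad q w ω r) (h' : IsGaussRadauQuad q w ω' r') :
    ω = ω' ∧ r = r' := by
  obtain ⟨hrng, hmono, hlast, hquad⟩ := h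
  obtain ⟨hrng', hmono', hlast', hquad'⟩ := h'
  have hinj : Function.Injective r := grq_inj q w hw ω r ⟨hrng, hmono, hlast, hquad⟩
  have hinj' : Function.Injective r' := grq_inj q w hw ω' r' ⟨hrng', hmono', hlast', hquad'⟩
  have hsm : StrictMono r := hmono.strictMono_of_injective hinj
  have hsm' : StrictMono r' := hmono'.strictMono_of_injective hinj'
  set Pq : ℝ[X] := ∏ i : Fin q, (X - C (r i.castSucc)) with hPq
  set Pq' : ℝ[X] := ∏ i : Fin q, (X - C (r' i.castSucc)) with hPq'
  have hmPq : Pq.Monic := monic_prod_of_monic _ _ fun k _ => monic_X_sub_C _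
  have hmPq' : Pq'.Monic := monic_prod_of_monic _ _ fun k _ => monic_X_sub_C _
  have hdPq : Pq.natDegree = q := by
    rw [hPq, natDegree_prod_of_monic _ _ fun k _ => monic_X_sub_C _]
    simp [natDegree_X_sub_C]
  have hdPq' : Pq'.natDegree = q := by
    rw [hPq', natDegree_prod_of_monic _ _ fun k _ => monic_X_sub_C _]
    simp [natDegree_X_sub_C]
  have hPqPq : Pq = Pq' := by
    by_contra hne
    set D : ℝ[X] := Pq - Pq' with hD
    have hD0 : D ≠ 0 := sub_ne_zero.2 hne
    have hdegD : D.natDegree < q := by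
      have hdd : Pq.degree = Pq'.degree := by
        rw [degree_eq_natDegree hmPq.ne_zero, degree_eq_natDegree hmPq'.ne_zero, hdPq, hdPq']
      have := degree_sub_lt hdd hmPq.ne_zero (by rw [hmPq.leadingCoeff, hmPq'.leadingCoeff])
      rw [degree_eq_natDegree hmPq.ne_zero, hdPq] at this
      exact (natDegree_lt_iff_degree_lt hD0).2 this
    set L : ℝ[X] := 1 - X with hL
    have hLd : L.natDegree ≤ 1 := by
      rw [hL]; exact (natDegree_sub_le _ _).trans (by simp)
    have hL0 : L ≠ 0 := fun h0 => by
      have h1 := congrArg (eval 0) h0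
      simp [hL] at h1
    have hd1 : (L * Pq * D).natDegree ≤ 2 * q := by
      calc (L * Pq * D).natDegree ≤ (L * Pq).natDegree + D.natDegree := natDegree_mul_le
        _ ≤ L.natDegree + Pq.natDegree + D.natDegree := by
            exact Nat.add_le_add_right natDegree_mul_le _
        _ ≤ 2 * q := by omega
    have hd2 : (L * Pq' * D).natDegree ≤ 2 * q := by
      calc (L * Pq' * D).natDegree ≤ (L * Pq').natDegree + D.natDegree := natDegree_mul_le
        _ ≤ L.natDegree + Pq'.natDegree + D.natDegree := by
            exact Nat.add_le_add_right natDegree_mul_le _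
        _ ≤ 2 * q := by omega
    have e1 : ∫ x in Set.Ioo (-1 : ℝ) 1, (L * Pq * D).eval x * w x = 0 := by
      rw [hquad _ hd1]
      refine Finset.sum_eq_zero fun j _ => ?_
      rcases Fin.eq_castSucc_or_eq_last j with ⟨i, rfl⟩ | rfl
      · have hz : Pq.eval (r i.castSucc) = 0 := by
          rw [hPq, eval_prod]
          exact prod_eq_zero (mem_univ i) (by simp)
        simp [eval_mul, hz]
      · simp [eval_mul, hL, hlast]
    have e2 : ∫ x in Set.Ioo (-1 : ℝ) 1, (L * Pq' * D).eval x * w x = 0 := by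
      rw [hquad' _ hd2]
      refine Finset.sum_eq_zero fun j _ => ?_
      rcases Fin.eq_castSucc_or_eq_last j with ⟨i, rfl⟩ | rfl
      · have hz : Pq'.eval (r' i.castSucc) = 0 := by
          rw [hPq', eval_prod]
          exact prod_eq_zero (mem_univ i) (by simp)
        simp [eval_mul, hz]
      · simp [eval_mul, hL, hlast']
    have hpoly : L * D ^ 2 = L * Pq * D - L * Pq' * D := by rw [hD]; ring
    have e3 : ∫ x in Set.Ioo (-1 : ℝ) 1, (L * D ^ 2).eval x * w x = 0 := by
      calc ∫ x in Set.Ioo (-1 : ℝ) 1, (L * D ^ 2).eval x * w x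
          = ∫ x in Set.Ioo (-1 : ℝ) 1,
              ((L * Pq * D).eval x * w x - (L * Pq' * D).eval x * w x) := by
            congr 1
            funext x
            rw [hpoly, eval_sub, sub_mul]
        _ = (∫ x in Set.Ioo (-1 : ℝ) 1, (L * Pq * D).eval x * w x)
              - ∫ x in Set.Ioo (-1 : ℝ) 1, (L * Pq' * D).eval x * w x :=
            integral_sub (grq_integrable w hw _) (grq_integrable w hw _)
        _ = 0 := by rw [e1, e2, sub_zero]
    have hpos := grq_pos w hw (L * D ^ 2) (mul_ne_zero hL0 (pow_ne_zero 2 hD0))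
      (fun x hx => by
        simp only [eval_mul, eval_pow, hL, eval_sub, eval_one, eval_X]
        have hx1 : x < 1 := hx.2
        have : (0:ℝ) ≤ 1 - x := by linarith
        exact mul_nonneg this (sq_nonneg _))
    rw [e3] at hpos
    exact lt_irrefl 0 hpos
  have hnodes : (fun i : Fin q => r i.castSucc) = fun i => r' i.castSucc := by
    have hsma : StrictMono fun i : Fin q => r i.castSucc :=
      hsm.comp Fin.strictMono_castSucc
    have hsma' : StrictMono fun i : Fin q => r' i.castSucc :=
      hsm'.comp Fin.strictMono_castSucc
    have hrange : Set.range (fun i : Fin q => r i.castSucc)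
        = Set.range fun i : Fin q => r' i.castSucc := by
      ext x
      simp only [Set.mem_range]
      constructor
      · rintro ⟨i, rfl⟩
        have hz : Pq'.eval (r i.castSucc) = 0 := by
          rw [← hPqPq, hPq, eval_prod]
          exact prod_eq_zero (mem_univ i) (by simp)
        rw [hPq', eval_prod] at hz
        obtain ⟨k, -, hk⟩ := prod_eq_zero_iff.1 hz
        simp only [eval_sub, eval_X, eval_C] at hk
        exact ⟨k, by linarith⟩
      · rintro ⟨i, rfl⟩
        have hz : Pq.eval (r' i.castSucc) = 0 := by
          rw [hPqPq, hPq', eval_prod]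
          exact prod_eq_zero (mem_univ i) (by simp)
        rw [hPq, eval_prod] at hz
        obtain ⟨k, -, hk⟩ := prod_eq_zero_iff.1 hz
        simp only [eval_sub, eval_X, eval_C] at hk
        exact ⟨k, by linarith⟩
    exact (@StrictMono.range_inj (Fin q) ℝ _ _ (inferInstance : WellFoundedLT (Fin q)) _ _ hsma hsma').1 hrange
  have hrr : r = r' := by
    funext j
    rcases Fin.eq_castSucc_or_eq_last j with ⟨i, rfl⟩ | rfl
    · exact congrFun hnodes i
    · rw [hlast, hlast']
  refine ⟨?_, hrr⟩
  funext i
  obtain ⟨hmon, hdeg⟩ := auxP_facts q r i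
  set P : ℝ[X] := (univ.erase i).prod fun k => ((X : ℝ[X]) - C (r k)) ^ 2 with hP
  have key1 := hquad P (le_of_eq hdeg)
  have key2 := hquad' P (le_of_eq hdeg)
  rw [← hrr] at key2
  have hzero : ∀ j, j ≠ i → P.eval (r j) = 0 := fun j hji => by
    rw [hP, eval_prod]
    exact prod_eq_zero (mem_erase.2 ⟨hji, mem_univ j⟩) (by simp)
  have hs1 : ∑ j, ω j * P.eval (r j) = ω i * P.eval (r i) :=
    Finset.sum_eq_single_of_mem i (mem_univ i) fun j _ hji => by
      rw [hzero j hji, mul_zero]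
  have hs2 : ∑ j, ω' j * P.eval (r j) = ω' i * P.eval (r i) :=
    Finset.sum_eq_single_of_mem i (mem_univ i) fun j _ hji => by
      rw [hzero j hji, mul_zero]
  have heq : ω i * P.eval (r i) = ω' i * P.eval (r i) := by
    rw [← hs1, ← hs2, ← key1, ← key2]
  have hPne : P.eval (r i) ≠ 0 := by
    rw [hP, eval_prod]
    refine prod_ne_zero_iff.2 fun k hk => ?_
    simp only [eval_pow, eval_sub, eval_X, eval_C]
    exact pow_ne_zero 2 (sub_ne_zero.2 fun he => (mem_erase.1 hk).1 (hinj he).symm)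
  exact mul_right_cancel₀ hPne heq
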